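/- arXiv:1804.03679 — 3 statements merged into one kernel-verified Lean document; each statement's English description precedes it below -/
import Mathlib

section
/- For every integer a ≥ 1, 2·p₃(a−3) + p₃(a−1) + 2·p₂,₁(a−2) = ⌊(3/4)a² + (1/3)a + 1/4⌋, where p₃(n) = ⌊n²/12 + n/2 + 1⌋ for n ≥ −2 and p₂,₁(n) = ⌊n²/4 + n + 1⌋ for n ≥ −1, with the convention that these functions are 0 for smaller arguments. -/
/-- `p₃(n) = ⌊n²/12 + n/2 + 1⌋` for `n ≥ -2`, and `0` for smaller arguments. -/
noncomputable def p3 (n : ℤ) : ℤ :=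
  if -2 ≤ n then ⌊((n : ℚ) ^ 2 / 12 + (n : ℚ) / 2 + 1)⌋ else 0

/-- `p₂,₁(n) = ⌊n²/4 + n + 1⌋` for `n ≥ -1`, and `0` for smaller arguments. -/
noncomputable def p21 (n : ℤ) : ℤ :=
  if -1 ≤ n then ⌊((n : ℚ) ^ 2 / 4 + (n : ℚ) + 1)⌋ else 0

lemma p3_eq (n : ℤ) (h : -2 ≤ n) : p3 n = (n^2 + 6*n + 12) / 12 := by
  rw [p3, if_pos h]
  have : ((n : ℚ) ^ 2 / 12 + (n : ℚ) / 2 + 1) = ((n^2 + 6*n + 12 : ℤ) : ℚ) / (12:ℕ) := by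
    push_cast; ring
  rw [this, Rat.floor_intCast_div_natCast]; norm_num

lemma p21_eq (n : ℤ) (h : -1 ≤ n) : p21 n = (n^2 + 4*n + 4) / 4 := by
  rw [p21, if_pos h]
  have : ((n : ℚ) ^ 2 / 4 + (n : ℚ) + 1) = ((n^2 + 4*n + 4 : ℤ) : ℚ) / (4:ℕ) := by
    push_cast; ring
  rw [this, Rat.floor_intCast_div_natCast]; norm_num

/-- For every integer `a ≥ 1`,
`2·p₃(a-3) + p₃(a-1) + 2·p₂,₁(a-2) = ⌊(3/4)a² + (1/3)a + 1/4⌋`. -/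
theorem r3_identity (a : ℤ) (ha : 1 ≤ a) :
    2 * p3 (a - 3) + p3 (a - 1) + 2 * p21 (a - 2) =
      ⌊((3 : ℚ) / 4 * (a : ℚ) ^ 2 + (1 : ℚ) / 3 * (a : ℚ) + 1 / 4)⌋ := by
  rw [p3_eq _ (by omega), p3_eq _ (by omega), p21_eq _ (by omega)]
  have hR : ((3 : ℚ) / 4 * (a : ℚ) ^ 2 + (1 : ℚ) / 3 * (a : ℚ) + 1 / 4)
      = ((9*a^2 + 4*a + 3 : ℤ) : ℚ) / (12:ℕ) := by push_cast; ring
  rw [hR, Rat.floor_intCast_div_natCast]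
  obtain ⟨q, r, hr, hr2, rfl⟩ : ∃ q r, 0 ≤ r ∧ r < 12 ∧ a = 12*q + r :=
    ⟨a / 12, a % 12, by omega, by omega, by omega⟩
  interval_cases r <;> ring_nf <;> omega
end

section
/- Let G be a finite group acting on a finite set of c boxes. The number of distributions of n identical balls into the c boxes, counted up to the action of G, equals the coefficient of xⁿ in Z_G(1/(1−x), 1/(1−x²), …, 1/(1−x^c)), where Z_G(t₁,…,t_c) = (1/|G|) Σ_{g∈G} t₁^{m₁(g)} ⋯ t_c^{m_c(g)} is the cycle index of the action and m_j(g) is the number of j-cycles of g. -/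
open scoped Classical

/-- `cycCount σ j`: the number of cycles of length `j` in the disjoint cycle
decomposition of the permutation `σ` (fixed points count as 1-cycles). -/
noncomputable def cycCount {c : ℕ} (σ : Equiv.Perm (Fin c)) (j : ℕ) : ℕ :=
  if j = 1 then c - σ.support.card else Multiset.count j σ.cycleType

/-- The geometric series `1/(1 - xʲ) = Σ_k x^{jk}`. -/
noncomputable def geomSeries (j : ℕ) : PowerSeries ℚ :=
  PowerSeries.mk fun k => if j ∣ k then 1 else 0

section Aux

open Equiv Equiv.Perm Finset

variable {c : ℕ} (σ : Equiv.Perm (Fin c))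

/-- The same-cycle setoid of a permutation. -/
def scS : Setoid (Fin c) :=
  ⟨σ.SameCycle, ⟨fun _ => Equiv.Perm.SameCycle.refl σ _, Equiv.Perm.SameCycle.symm,
    Equiv.Perm.SameCycle.trans⟩⟩

/-- The fiber (orbit) of a class. -/
noncomputable def fib (o : Quotient (scS σ)) : Finset (Fin c) :=
  Finset.univ.filter (fun i => Quotient.mk (scS σ) i = o)

lemma mem_fib {o : Quotient (scS σ)} {i : Fin c} :
    i ∈ fib σ o ↔ Quotient.mk (scS σ) i = o := by
  simp [fib]

lemma fib_mk (a : Fin c) :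
    fib σ (Quotient.mk (scS σ) a)
      = if a ∈ σ.support then (σ.cycleOf a).support else {a} := by
  ext b
  rw [mem_fib]
  have hq : Quotient.mk (scS σ) b = Quotient.mk (scS σ) a ↔ σ.SameCycle b a :=
    ⟨Quotient.exact, fun h => Quotient.sound (a := b) (b := a) h⟩
  rw [hq]
  by_cases h : a ∈ σ.support
  · rw [if_pos h, Equiv.Perm.mem_support_cycleOf_iff]
    exact ⟨fun h' => ⟨h'.symm, h⟩, fun h' => h'.1.symm⟩
  · rw [if_neg h, Finset.mem_singleton]
    constructor
    · rintro h'
      obtain ⟨k, hk⟩ := h'.symm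
      rw [← hk, Equiv.Perm.zpow_apply_eq_self_of_apply_eq_self
        (Equiv.Perm.notMem_support.1 h)]
    · rintro rfl; exact Equiv.Perm.SameCycle.refl σ b

lemma out_mem_fib (o : Quotient (scS σ)) : o.out ∈ fib σ o := by
  rw [mem_fib]; exact Quotient.out_eq o

lemma one_le_card_fib (o : Quotient (scS σ)) : 1 ≤ (fib σ o).card :=
  Finset.card_pos.2 ⟨o.out, out_mem_fib σ o⟩

lemma card_fib_le (o : Quotient (scS σ)) : (fib σ o).card ≤ c := by
  simpa using Finset.card_le_univ (fib σ o)

lemma fib_out (o : Quotient (scS σ)) :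
    fib σ o = if o.out ∈ σ.support then (σ.cycleOf o.out).support else {o.out} := by
  have := fib_mk σ o.out
  rwa [Quotient.out_eq] at this

lemma out_mem_support {o : Quotient (scS σ)} (h : (fib σ o).card ≠ 1) :
    o.out ∈ σ.support := by
  by_contra hc
  rw [fib_out, if_neg hc] at h
  exact h (Finset.card_singleton _)

lemma card_filter_fib (j : ℕ) (hj : j ∈ Finset.Icc 1 c) :
    (Finset.univ.filter fun o : Quotient (scS σ) => (fib σ o).card = j).card
      = cycCount σ j := by
  simp only [Finset.mem_Icc] at hj
  by_cases hj1 : j = 1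
  · subst hj1
    rw [cycCount, if_pos rfl]
    have : (Finset.univ \ σ.support).card = c - σ.support.card := by
      rw [Finset.card_sdiff_of_subset (Finset.subset_univ _), Finset.card_univ, Fintype.card_fin]
    rw [← this]
    apply Finset.card_bij (fun o _ => o.out)
    · intro o ho
      rw [Finset.mem_filter] at ho
      rw [Finset.mem_sdiff]
      refine ⟨Finset.mem_univ _, fun hs => ?_⟩
      rw [fib_out, if_pos hs] at ho
      have h2 := (Equiv.Perm.isCycle_cycleOf σ
        (Equiv.Perm.mem_support.1 hs)).two_le_card_support
      omega
    · intro o _ o' _ h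
      rw [← Quotient.out_eq o, ← Quotient.out_eq o', h]
    · intro b hb
      rw [Finset.mem_sdiff] at hb
      refine ⟨Quotient.mk (scS σ) b, ?_, ?_⟩
      · rw [Finset.mem_filter, fib_mk, if_neg hb.2]
        exact ⟨Finset.mem_univ _, Finset.card_singleton _⟩
      · have h1 := out_mem_fib σ (Quotient.mk (scS σ) b)
        rw [fib_mk, if_neg hb.2, Finset.mem_singleton] at h1
        exact h1
  · have hj2 : 2 ≤ j := by omega
    rw [cycCount, if_neg hj1, Equiv.Perm.cycleType_def, Multiset.count_map]
    have h1 : Multiset.filter (fun f => j = (Finset.card ∘ Equiv.Perm.support) f)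
        σ.cycleFactorsFinset.val
        = Multiset.filter (fun f => f.support.card = j) σ.cycleFactorsFinset.val :=
      Multiset.filter_congr (fun f _ => by simp [Function.comp, eq_comm])
    have h2 : (σ.cycleFactorsFinset.filter (fun f => f.support.card = j)).card
        = Multiset.card
            (Multiset.filter (fun f => f.support.card = j) σ.cycleFactorsFinset.val) := by
      rw [Finset.card_def, Finset.filter_val]
    rw [h1, ← h2]
    apply Finset.card_bij (fun o _ => σ.cycleOf o.out)
    · intro o ho
      rw [Finset.mem_filter] at ho
      have hs : o.out ∈ σ.support := out_mem_support σ (by omega)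
      rw [fib_out, if_pos hs] at ho
      rw [Finset.mem_filter]
      exact ⟨Equiv.Perm.cycleOf_mem_cycleFactorsFinset_iff.2 hs, ho.2⟩
    · intro o ho o' ho' h
      rw [Finset.mem_filter] at ho ho'
      have hs : o.out ∈ σ.support := out_mem_support σ (by omega)
      have hs' : o'.out ∈ σ.support := out_mem_support σ (by omega)
      have h1 : o.out ∈ (σ.cycleOf o'.out).support := by
        rw [← h, Equiv.Perm.mem_support_cycleOf_iff]
        exact ⟨Equiv.Perm.SameCycle.refl σ _, hs⟩
      rw [Equiv.Perm.mem_support_cycleOf_iff] at h1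
      rw [← Quotient.out_eq o, ← Quotient.out_eq o']
      exact (Quotient.sound h1.1.symm)
    · intro f hf
      rw [Finset.mem_filter] at hf
      have hne : f.support.Nonempty := by
        rw [← Finset.card_pos, hf.2]; omega
      obtain ⟨a, ha⟩ := hne
      have hfa : f = σ.cycleOf a := Equiv.Perm.cycle_is_cycleOf ha hf.1
      have has : a ∈ σ.support := by
        rw [← Equiv.Perm.cycleOf_mem_cycleFactorsFinset_iff, ← hfa]; exact hf.1
      refine ⟨Quotient.mk (scS σ) a, ?_, ?_⟩
      · rw [Finset.mem_filter, fib_mk, if_pos has, ← hfa]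
        exact ⟨Finset.mem_univ _, hf.2⟩
      · have hsc : σ.SameCycle (Quotient.mk (scS σ) a).out a :=
          @Quotient.exact _ (scS σ) ((Quotient.mk (scS σ) a).out) a
            (Quotient.out_eq (Quotient.mk (scS σ) a))
        rw [hsc.cycleOf_eq, ← hfa]

lemma invariant_sameCycle {ℓ : Fin c → ℕ} (hℓ : ∀ i, ℓ (σ i) = ℓ i) {a b : Fin c}
    (h : σ.SameCycle a b) : ℓ a = ℓ b := by
  obtain ⟨k, hk⟩ := h
  rw [← hk]
  clear hk
  induction k using Int.induction_on with
  | zero => simp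
  | succ k ih =>
      have : (σ ^ ((k : ℤ) + 1)) a = σ ((σ ^ (k : ℤ)) a) := by
        rw [add_comm, zpow_add, zpow_one]; rfl
      rw [this, hℓ, ih]
  | pred k ih =>
      have : (σ ^ ((-k : ℤ) - 1)) a = σ⁻¹ ((σ ^ (-k : ℤ)) a) := by
        rw [sub_eq_add_neg, add_comm, zpow_add, zpow_neg, zpow_one]; rfl
      rw [this, ih]
      have := hℓ (σ⁻¹ ((σ ^ (-k : ℤ)) a))
      rw [Equiv.Perm.coe_inv, Equiv.apply_symm_apply] at this
      exact this

lemma fixCard_eq (n : ℕ) :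
    (Nat.card {ℓ : Fin c → ℕ // (∀ i, ℓ (σ i) = ℓ i) ∧ ∑ i, ℓ i = n} : ℚ)
      = PowerSeries.coeff (R := ℚ) n
          (∏ j ∈ Finset.Icc 1 c, geomSeries j ^ cycCount σ j) := by
  classical
  have hprod : ∏ j ∈ Finset.Icc 1 c, geomSeries j ^ cycCount σ j
      = ∏ o : Quotient (scS σ), geomSeries ((fib σ o).card) := by
    rw [← Finset.prod_fiberwise_of_maps_to
      (g := fun o : Quotient (scS σ) => (fib σ o).card) (t := Finset.Icc 1 c)
      (fun o _ => Finset.mem_Icc.2 ⟨one_le_card_fib σ o, card_fib_le σ o⟩)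
      (fun o => geomSeries ((fib σ o).card))]
    apply Finset.prod_congr rfl
    intro j hj
    have h1 : (∏ o ∈ Finset.univ.filter fun o : Quotient (scS σ) => (fib σ o).card = j,
        geomSeries ((fib σ o).card))
        = ∏ o ∈ Finset.univ.filter fun o : Quotient (scS σ) => (fib σ o).card = j,
          geomSeries j :=
      Finset.prod_congr rfl (fun o ho => by rw [(Finset.mem_filter.1 ho).2])
    rw [h1, Finset.prod_const, card_filter_fib σ j hj]
  rw [hprod, PowerSeries.coeff_prod]
  have hco : ∀ l : Quotient (scS σ) →₀ ℕ,
      (∏ o : Quotient (scS σ), PowerSeries.coeff (R := ℚ) (l o) (geomSeries ((fib σ o).card)))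
        = if (∀ o ∈ (Finset.univ : Finset (Quotient (scS σ))), (fib σ o).card ∣ l o)
          then (1 : ℚ) else 0 := by
    intro l
    have h1 : ∀ o ∈ (Finset.univ : Finset (Quotient (scS σ))),
        PowerSeries.coeff (R := ℚ) (l o) (geomSeries ((fib σ o).card))
          = if (fib σ o).card ∣ l o then (1 : ℚ) else 0 := fun o _ => by
      rw [geomSeries, PowerSeries.coeff_mk]
    rw [Finset.prod_congr rfl h1, Finset.prod_boole]
    congr 1
  rw [Finset.sum_congr rfl (fun l _ => hco l), Finset.sum_boole]
  have hcardpos : ∀ o : Quotient (scS σ), 0 < (fib σ o).card := fun o =>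
    lt_of_lt_of_le Nat.zero_lt_one (one_le_card_fib σ o)
  have hmk : ∀ i : Fin c, σ.SameCycle ((Quotient.mk (scS σ) i).out) i := fun i =>
    @Quotient.exact _ (scS σ) ((Quotient.mk (scS σ) i).out) i
      (Quotient.out_eq (Quotient.mk (scS σ) i))
  -- the auxiliary sum identity: summing a `σ`-invariant function fiberwise
  have hfibsum : ∀ ℓ : Fin c → ℕ, (∀ i, ℓ (σ i) = ℓ i) →
      ∑ o : Quotient (scS σ), (fib σ o).card * ℓ o.out = ∑ i, ℓ i := by
    intro ℓ hinv
    have h2 : ∀ o ∈ (Finset.univ : Finset (Quotient (scS σ))),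
        (fib σ o).card * ℓ o.out
          = ∑ i ∈ Finset.univ.filter (fun i => Quotient.mk (scS σ) i = o), ℓ i := by
      intro o _
      have h3 : ∀ i ∈ Finset.univ.filter (fun i => Quotient.mk (scS σ) i = o),
          ℓ i = ℓ o.out := by
        intro i hi
        have hio : Quotient.mk (scS σ) i = o := (Finset.mem_filter.1 hi).2
        exact invariant_sameCycle σ hinv
          (@Quotient.exact _ (scS σ) i o.out (by rw [hio, Quotient.out_eq]))
      rw [Finset.sum_congr rfl h3, Finset.sum_const, smul_eq_mul]
      rfl
    rw [Finset.sum_congr rfl h2]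
    exact Finset.sum_fiberwise Finset.univ (fun i => Quotient.mk (scS σ) i) ℓ
  have key : Nat.card {ℓ : Fin c → ℕ // (∀ i, ℓ (σ i) = ℓ i) ∧ ∑ i, ℓ i = n}
      = ((Finset.finsuppAntidiag (Finset.univ : Finset (Quotient (scS σ))) n).filter
          (fun l => ∀ o ∈ (Finset.univ : Finset (Quotient (scS σ))),
            (fib σ o).card ∣ l o)).card := by
    rw [← Nat.card_eq_finsetCard]
    apply Nat.card_congr
    refine
      { toFun := fun ℓ => ⟨Finsupp.equivFunOnFinite.symm
          (fun o => (fib σ o).card * ℓ.1 o.out), ?_⟩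
        invFun := fun l => ⟨fun i => l.1 (Quotient.mk (scS σ) i)
          / (fib σ (Quotient.mk (scS σ) i)).card, ?_, ?_⟩
        left_inv := ?_
        right_inv := ?_ }
    · -- membership in the filtered antidiagonal
      obtain ⟨ℓ, hinv, hsum⟩ := ℓ
      rw [Finset.mem_filter, Finset.mem_finsuppAntidiag]
      refine ⟨⟨?_, Finset.subset_univ _⟩, ?_⟩
      · have h1 : ∀ o ∈ (Finset.univ : Finset (Quotient (scS σ))),
            (Finsupp.equivFunOnFinite.symm
              (fun o => (fib σ o).card * ℓ o.out)) o = (fib σ o).card * ℓ o.out :=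
          fun o _ => by rw [Finsupp.coe_equivFunOnFinite_symm]
        rw [Finset.sum_congr rfl h1]
        rw [hfibsum ℓ hinv]
        exact hsum
      · intro o _
        rw [Finsupp.coe_equivFunOnFinite_symm]
        exact dvd_mul_right _ _
    · -- σ-invariance of the inverse image
      intro i
      have hq : Quotient.mk (scS σ) (σ i) = Quotient.mk (scS σ) i :=
        Quotient.sound (Equiv.Perm.sameCycle_apply_left.2 (Equiv.Perm.SameCycle.refl σ i))
      show l.1 (Quotient.mk (scS σ) (σ i)) / (fib σ (Quotient.mk (scS σ) (σ i))).card
        = l.1 (Quotient.mk (scS σ) i) / (fib σ (Quotient.mk (scS σ) i)).card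
      rw [hq]
    · -- the total sum of the inverse image
      have hl := l.2
      rw [Finset.mem_filter, Finset.mem_finsuppAntidiag] at hl
      obtain ⟨⟨hsum, -⟩, hdvd⟩ := hl
      have hinv : ∀ i, l.1 (Quotient.mk (scS σ) (σ i))
          / (fib σ (Quotient.mk (scS σ) (σ i))).card
          = l.1 (Quotient.mk (scS σ) i) / (fib σ (Quotient.mk (scS σ) i)).card := by
        intro i
        have hq : Quotient.mk (scS σ) (σ i) = Quotient.mk (scS σ) i :=
          Quotient.sound (Equiv.Perm.sameCycle_apply_left.2 (Equiv.Perm.SameCycle.refl σ i))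
        rw [hq]
      have h4 := hfibsum (fun i => l.1 (Quotient.mk (scS σ) i)
        / (fib σ (Quotient.mk (scS σ) i)).card) hinv
      rw [← h4]
      have h5 : ∀ o ∈ (Finset.univ : Finset (Quotient (scS σ))),
          (fib σ o).card * (l.1 (Quotient.mk (scS σ) o.out)
            / (fib σ (Quotient.mk (scS σ) o.out)).card) = l.1 o := by
        intro o _
        rw [Quotient.out_eq]
        exact Nat.mul_div_cancel' (hdvd o (Finset.mem_univ o))
      rw [Finset.sum_congr rfl h5]
      exact hsum
    · -- left inverse
      rintro ⟨ℓ, hinv, hsum⟩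
      apply Subtype.ext
      funext i
      show (Finsupp.equivFunOnFinite.symm fun o => (fib σ o).card * ℓ o.out)
          (Quotient.mk (scS σ) i) / (fib σ (Quotient.mk (scS σ) i)).card = ℓ i
      simp only [Finsupp.coe_equivFunOnFinite_symm]
      rw [Nat.mul_div_cancel_left _ (hcardpos _)]
      exact invariant_sameCycle σ hinv (hmk i)
    · -- right inverse
      rintro ⟨l, hl⟩
      rw [Finset.mem_filter] at hl
      apply Subtype.ext
      apply Finsupp.ext
      intro o
      show (Finsupp.equivFunOnFinite.symm fun o' => (fib σ o').card
        * (l (Quotient.mk (scS σ) o'.out) / (fib σ (Quotient.mk (scS σ) o'.out)).card)) o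
        = l o
      simp only [Finsupp.coe_equivFunOnFinite_symm]
      rw [Quotient.out_eq]
      exact Nat.mul_div_cancel' (hl.2 o (Finset.mem_univ o))
  rw [key]

end Aux

instance distMulAction (c n : ℕ) (G : Type) [Group G] [MulAction G (Fin c)] :
    MulAction G {ℓ : Fin c → ℕ // ∑ i, ℓ i = n} where
  smul g ℓ := ⟨fun i => ℓ.1 (g⁻¹ • i), by
    rw [show ∑ i : Fin c, ℓ.1 (g⁻¹ • i) = ∑ i : Fin c, ℓ.1 i from
      Fintype.sum_equiv (MulAction.toPerm g⁻¹) _ _ (fun i => rfl), ℓ.2]⟩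
  one_smul ℓ := by
    apply Subtype.ext; funext i
    show ℓ.1 ((1 : G)⁻¹ • i) = ℓ.1 i
    rw [inv_one, one_smul]
  mul_smul g h ℓ := by
    apply Subtype.ext; funext i
    show ℓ.1 ((g * h)⁻¹ • i) = ℓ.1 (h⁻¹ • g⁻¹ • i)
    rw [mul_inv_rev, mul_smul]

/-- Cycle index theorem for balls into boxes: the number of `G`-orbits of
distributions of `n` identical balls into `c` boxes equals the coefficient of
`xⁿ` in `Z_G(1/(1-x), 1/(1-x²), …, 1/(1-x^c))`. -/
theorem cycle_index_balls (c n : ℕ) (G : Type) [Group G] [Fintype G]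
    [MulAction G (Fin c)] :
    (Nat.card (Quot (fun x y : {ℓ : Fin c → ℕ // ∑ i, ℓ i = n} =>
        ∃ g : G, ∀ i : Fin c, y.1 i = x.1 (g⁻¹ • i))) : ℚ) =
      PowerSeries.coeff (R := ℚ) n
        ((Fintype.card G : ℚ)⁻¹ •
          ∑ g : G, ∏ j ∈ Finset.Icc 1 c,
            geomSeries j ^ cycCount (MulAction.toPerm g : Equiv.Perm (Fin c)) j) := by
  classical
  -- `X` is the (finite) set of distributions
  haveI hXfin : Fintype {ℓ : Fin c → ℕ // ∑ i, ℓ i = n} := by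
    apply Fintype.ofInjective (β := Fin c → Fin (n + 1))
      (fun ℓ i => ⟨ℓ.1 i, Nat.lt_succ_of_le (le_trans
        (Finset.single_le_sum (f := ℓ.1) (fun i _ => Nat.zero_le _) (Finset.mem_univ i))
        (le_of_eq ℓ.2))⟩)
    intro ℓ ℓ' h
    apply Subtype.ext
    funext i
    exact congrArg Fin.val (congrFun h i)
  -- identify the quotient with the orbit-relation quotient
  have hrel : ∀ x y : {ℓ : Fin c → ℕ // ∑ i, ℓ i = n},
      (∃ g : G, ∀ i : Fin c, y.1 i = x.1 (g⁻¹ • i)) ↔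
        Setoid.r (self := MulAction.orbitRel G {ℓ : Fin c → ℕ // ∑ i, ℓ i = n}) x y := by
    intro x y
    constructor
    · rintro ⟨g, hg⟩
      refine ⟨g⁻¹, ?_⟩
      apply Subtype.ext
      funext i
      show y.1 ((g⁻¹)⁻¹ • i) = x.1 i
      rw [inv_inv, hg (g • i), inv_smul_smul]
    · rintro ⟨g, hg⟩
      refine ⟨g⁻¹, fun i => ?_⟩
      rw [inv_inv, ← hg]
      show y.1 i = (g • y).1 (g • i)
      show y.1 i = y.1 (g⁻¹ • g • i)
      rw [inv_smul_smul]
  have e1 : Quot (fun x y : {ℓ : Fin c → ℕ // ∑ i, ℓ i = n} =>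
        ∃ g : G, ∀ i : Fin c, y.1 i = x.1 (g⁻¹ • i))
      ≃ Quotient (MulAction.orbitRel G {ℓ : Fin c → ℕ // ∑ i, ℓ i = n}) :=
    Quot.congrRight hrel
  -- fixed points of `g` are the `toPerm g`-invariant distributions
  have hfixcard : ∀ g : G,
      (Fintype.card (MulAction.fixedBy {ℓ : Fin c → ℕ // ∑ i, ℓ i = n} g) : ℚ)
        = PowerSeries.coeff (R := ℚ) n (∏ j ∈ Finset.Icc 1 c,
            geomSeries j ^ cycCount (MulAction.toPerm g : Equiv.Perm (Fin c)) j) := by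
    intro g
    rw [← fixCard_eq]
    congr 1
    rw [← Nat.card_eq_fintype_card]
    apply Nat.card_congr
    refine
      { toFun := fun x => ⟨x.1.1, fun i => ?_, x.1.2⟩
        invFun := fun ℓ => ⟨⟨ℓ.1, ℓ.2.2⟩, ?_⟩
        left_inv := fun x => by apply Subtype.ext; apply Subtype.ext; rfl
        right_inv := fun ℓ => by apply Subtype.ext; rfl }
    · have h1 : ∀ j : Fin c, x.1.1 (g⁻¹ • j) = x.1.1 j := fun j =>
        congrFun (congrArg Subtype.val x.2) j
      have h2 := h1 (g • i)
      rw [inv_smul_smul] at h2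
      exact h2.symm
    · apply Subtype.ext
      funext i
      show ℓ.1 (g⁻¹ • i) = ℓ.1 i
      have h2 := ℓ.2.1 (g⁻¹ • i)
      have : (MulAction.toPerm g : Equiv.Perm (Fin c)) (g⁻¹ • i) = i := by
        show g • g⁻¹ • i = i
        rw [smul_inv_smul]
      rw [this] at h2
      exact h2.symm
  -- Burnside's lemma
  have hb := MulAction.sum_card_fixedBy_eq_card_orbits_mul_card_group G
    {ℓ : Fin c → ℕ // ∑ i, ℓ i = n}
  have hGpos : (Fintype.card G : ℚ) ≠ 0 := Nat.cast_ne_zero.2 Fintype.card_ne_zero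
  rw [Nat.card_congr e1, Nat.card_eq_fintype_card]
  rw [map_smul, map_sum, smul_eq_mul]
  rw [Finset.sum_congr rfl (fun g _ => (hfixcard g).symm)]
  have hbq : (∑ g : G, (Fintype.card
        (MulAction.fixedBy {ℓ : Fin c → ℕ // ∑ i, ℓ i = n} g) : ℚ))
      = (Fintype.card (Quotient (MulAction.orbitRel G
          {ℓ : Fin c → ℕ // ∑ i, ℓ i = n})) : ℚ) * Fintype.card G := by
    rw [← Nat.cast_sum, hb]
    push_cast
    ring
  rw [hbq]
  field_simp
end

section
/- For every fixed c ≥ 1 there exists a constant K such that R(c,a) ≤ K·a^{c−1} for all a ≥ 1. -/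
/-- A graded rank-3 lattice with `c` coatoms and `a` atoms, encoded as the
bipartite adjacency between coatoms and atoms: no isolated vertices, and any
two distinct vertices in the same class have at most one common neighbor. -/
def Rank3Lat (c a : ℕ) : Type :=
  {E : Fin c → Fin a → Bool //
    (∀ i, ∃ j, E i j) ∧ (∀ j, ∃ i, E i j) ∧
    (∀ j₁ j₂ : Fin a, j₁ ≠ j₂ → ∀ i₁ i₂ : Fin c,
      E i₁ j₁ → E i₁ j₂ → E i₂ j₁ → E i₂ j₂ → i₁ = i₂) ∧
    (∀ i₁ i₂ : Fin c, i₁ ≠ i₂ → ∀ j₁ j₂ : Fin a,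
      E i₁ j₁ → E i₂ j₁ → E i₁ j₂ → E i₂ j₂ → j₁ = j₂)}

/-- Color-preserving isomorphism of such bipartite structures. -/
def Rank3Iso {c a : ℕ} (x y : Rank3Lat c a) : Prop :=
  ∃ σ : Equiv.Perm (Fin c), ∃ τ : Equiv.Perm (Fin a),
    ∀ i j, x.1 i j = y.1 (σ i) (τ j)

/-- `R c a`: the number of unlabeled graded rank-3 lattices with `c` coatoms
and `a` atoms. -/
noncomputable def R (c a : ℕ) : ℕ := Nat.card (Quot (@Rank3Iso c a))

namespace MyAux
variable {c a : ℕ}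

instance : Finite (Rank3Lat c a) := by unfold Rank3Lat; exact Subtype.finite

def nbr (x : Rank3Lat c a) (j : Fin a) : Finset (Fin c) :=
  Finset.univ.filter (fun i => x.1 i j = true)

lemma mem_nbr {x : Rank3Lat c a} {i : Fin c} {j : Fin a} :
    i ∈ nbr x j ↔ x.1 i j = true := by simp [nbr]

noncomputable def enc {c : ℕ} : Finset (Fin c) → ℕ := Encodable.encode

lemma enc_inj : Function.Injective (enc (c := c)) := Encodable.encode_injective

def IsSorted (x : Rank3Lat c a) : Prop := Monotone (fun j => enc (nbr x j))

lemma exists_sorted (x : Rank3Lat c a) :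
    ∃ y : Rank3Lat c a, IsSorted y ∧ Rank3Iso y x := by
  classical
  set f : Fin a → ℕ := fun j => enc (nbr x j) with hf
  set τ : Equiv.Perm (Fin a) := Tuple.sort f with hτ
  have hprop : (∀ i, ∃ j, x.1 i (τ j) = true) ∧ (∀ j, ∃ i, x.1 i (τ j) = true) ∧
      (∀ j₁ j₂ : Fin a, j₁ ≠ j₂ → ∀ i₁ i₂ : Fin c,
        x.1 i₁ (τ j₁) → x.1 i₁ (τ j₂) → x.1 i₂ (τ j₁) → x.1 i₂ (τ j₂) → i₁ = i₂) ∧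
      (∀ i₁ i₂ : Fin c, i₁ ≠ i₂ → ∀ j₁ j₂ : Fin a,
        x.1 i₁ (τ j₁) → x.1 i₂ (τ j₁) → x.1 i₁ (τ j₂) → x.1 i₂ (τ j₂) → j₁ = j₂) := by
    obtain ⟨h1, h2, h3, h4⟩ := x.2
    refine ⟨?_, fun j => h2 (τ j), ?_, ?_⟩
    · intro i
      obtain ⟨j, hj⟩ := h1 i
      exact ⟨τ.symm j, by simpa using hj⟩
    · intro j₁ j₂ hne i₁ i₂
      exact h3 (τ j₁) (τ j₂) (fun h => hne (τ.injective h)) i₁ i₂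
    · intro i₁ i₂ hne j₁ j₂ a1 a2 a3 a4
      exact τ.injective (h4 i₁ i₂ hne (τ j₁) (τ j₂) a1 a2 a3 a4)
  refine ⟨⟨fun i j => x.1 i (τ j), hprop⟩, ?_, ?_⟩
  · have hkey : (fun j => enc (nbr (⟨fun i j => x.1 i (τ j), hprop⟩ : Rank3Lat c a) j))
        = f ∘ τ := by
      funext j
      rfl
    unfold IsSorted
    rw [hkey]
    exact Tuple.monotone_sort f
  · exact ⟨1, τ, fun i j => by simp⟩

open Classical in
noncomputable def cnt (x : Rank3Lat c a) (s : Finset (Fin c)) : ℕ :=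
  (Finset.univ.filter (fun j => nbr x j = s)).card

lemma sum_cnt (x : Rank3Lat c a) : ∑ s : Finset (Fin c), cnt x s = a := by
  classical
  have := Finset.card_eq_sum_card_fiberwise (f := nbr x) (s := Finset.univ)
    (t := Finset.univ) (fun j _ => Finset.mem_univ _)
  simp only [cnt]
  symm
  simpa using this

lemma cnt_empty (x : Rank3Lat c a) : cnt x ∅ = 0 := by
  classical
  simp only [cnt, Finset.card_eq_zero, Finset.filter_eq_empty_iff]
  intro j _
  obtain ⟨i, hi⟩ := x.2.2.1 j
  exact fun h => by simpa [h] using (mem_nbr.mpr hi)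

lemma cnt_le (x : Rank3Lat c a) (s : Finset (Fin c)) : cnt x s ≤ a := by
  classical
  unfold cnt; exact (Finset.card_filter_le _ _).trans (by simp)

lemma cnt_big_le_one (x : Rank3Lat c a) {s : Finset (Fin c)} (hs : 2 ≤ s.card) :
    cnt x s ≤ 1 := by
  classical
  rw [cnt, Finset.card_le_one]
  intro j₁ hj₁ j₂ hj₂
  simp only [Finset.mem_filter] at hj₁ hj₂
  by_contra hne
  obtain ⟨i₁, hi₁, i₂, hi₂, hii⟩ := Finset.one_lt_card.mp (by omega : 1 < s.card)
  exact hii <| x.2.2.2.1 j₁ j₂ hne i₁ i₂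
    (mem_nbr.mp (hj₁.2 ▸ hi₁)) (mem_nbr.mp (hj₂.2 ▸ hi₁))
    (mem_nbr.mp (hj₁.2 ▸ hi₂)) (mem_nbr.mp (hj₂.2 ▸ hi₂))

lemma eq_of_sorted_of_cnt {x y : Rank3Lat c a} (hx : IsSorted x) (hy : IsSorted y)
    (h : ∀ s, cnt x s = cnt y s) : x = y := by
  classical
  have hcount : ∀ (z : Rank3Lat c a) (s : Finset (Fin c)),
      Multiset.count s (Multiset.map (nbr z) Finset.univ.val) = cnt z s := by
    intro z s
    rw [Multiset.count_map, cnt]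
    simp [Finset.card, Finset.filter, eq_comm]
  have hmul : ((List.ofFn (nbr x) : List (Finset (Fin c))) : Multiset (Finset (Fin c))) = ((List.ofFn (nbr y) : List (Finset (Fin c))) : Multiset (Finset (Fin c))) := by
    have hx' : (Multiset.map (nbr x) Finset.univ.val) = ((List.ofFn (nbr x) : List (Finset (Fin c))) : Multiset (Finset (Fin c))) := by
      simp [List.ofFn_eq_map, Fin.univ_def]
    have hy' : (Multiset.map (nbr y) Finset.univ.val) = ((List.ofFn (nbr y) : List (Finset (Fin c))) : Multiset (Finset (Fin c))) := by
      simp [List.ofFn_eq_map, Fin.univ_def]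
    rw [← hx', ← hy']
    apply Multiset.ext.mpr
    intro s
    rw [hcount, hcount, h]
  have hperm : (List.ofFn (nbr x)).Perm (List.ofFn (nbr y)) := Multiset.coe_eq_coe.mp hmul
  have hperm2 : (List.ofFn (fun j => enc (nbr x j))).Perm
      (List.ofFn (fun j => enc (nbr y j))) := by
    have := hperm.map enc
    simpa [List.map_ofFn, Function.comp_def] using this
  have heq : (fun j => enc (nbr x j)) = (fun j => enc (nbr y j)) :=
    List.ofFn_injective <| List.Perm.eq_of_sortedLE hx.sortedLE_ofFn hy.sortedLE_ofFn hperm2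
  have hnbr : ∀ j, nbr x j = nbr y j := fun j => enc_inj (congrFun heq j)
  apply Subtype.ext
  funext i j
  have : (x.1 i j = true) ↔ (y.1 i j = true) := by
    rw [← mem_nbr, ← mem_nbr, hnbr j]
  exact Bool.eq_iff_iff.mpr this

open Classical in
noncomputable def bigs (x : Rank3Lat c a) : Finset (Finset (Fin c)) :=
  Finset.univ.filter (fun s => 2 ≤ s.card ∧ cnt x s ≠ 0)

open Classical in
noncomputable def Psi (x : {z : Rank3Lat c a // IsSorted z}) :
    Finset (Finset (Fin c)) × (Fin (c - 1) → Fin (a + 1)) :=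
  ⟨bigs x.1, fun k =>
    ⟨cnt x.1 {Fin.castLE (Nat.sub_le c 1) k}, Nat.lt_succ_of_le (cnt_le x.1 _)⟩⟩

lemma Psi_injective (hc : 1 ≤ c) :
    Function.Injective (Psi (c := c) (a := a)) := by
  classical
  intro x y hxy
  have hbigs : bigs x.1 = bigs y.1 := congrArg Prod.fst hxy
  have hsmall : ∀ k : Fin (c - 1),
      cnt x.1 {Fin.castLE (Nat.sub_le c 1) k} = cnt y.1 {Fin.castLE (Nat.sub_le c 1) k} := by
    intro k
    have := congrFun (congrArg Prod.snd hxy) k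
    exact congrArg Fin.val this
  set ilast : Fin c := ⟨c - 1, by omega⟩ with hilast
  have hother : ∀ s : Finset (Fin c), s ≠ {ilast} → cnt x.1 s = cnt y.1 s := by
    intro s hs
    rcases Nat.lt_or_ge s.card 2 with hcard | hcard
    · interval_cases h : s.card
      · rw [Finset.card_eq_zero.mp h, cnt_empty, cnt_empty]
      · obtain ⟨i, rfl⟩ := Finset.card_eq_one.mp h
        have hi : i ≠ ilast := fun hne => hs (by rw [hne])
        have hlt : (i : ℕ) < c - 1 := by
          have := i.isLt
          have : (i : ℕ) ≠ c - 1 := fun hv => hi (Fin.ext hv)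
          omega
        have := hsmall ⟨i, hlt⟩
        simpa [Fin.castLE, Fin.ext_iff] using this
    · have h1 := cnt_big_le_one x.1 hcard
      have h2 := cnt_big_le_one y.1 hcard
      have hmem : (s ∈ bigs x.1) ↔ (s ∈ bigs y.1) := by rw [hbigs]
      simp only [bigs, Finset.mem_filter, Finset.mem_univ, true_and, hcard, true_and] at hmem
      omega
  have hlast : cnt x.1 {ilast} = cnt y.1 {ilast} := by
    have hx := sum_cnt x.1
    have hy := sum_cnt y.1
    have herase : ∑ s ∈ Finset.univ.erase {ilast}, cnt x.1 s
        = ∑ s ∈ Finset.univ.erase {ilast}, cnt y.1 s :=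
      Finset.sum_congr rfl (fun s hs => hother s (Finset.mem_erase.mp hs).1)
    have hx2 := Finset.add_sum_erase Finset.univ (cnt x.1) (Finset.mem_univ {ilast})
    have hy2 := Finset.add_sum_erase Finset.univ (cnt y.1) (Finset.mem_univ {ilast})
    omega
  have hall : ∀ s, cnt x.1 s = cnt y.1 s := by
    intro s
    by_cases hs : s = {ilast}
    · rw [hs]; exact hlast
    · exact hother s hs
  exact Subtype.ext (eq_of_sorted_of_cnt x.2 y.2 hall)

end MyAux

/-- For every fixed `c ≥ 1` there is a constant `K` with `R(c,a) ≤ K·a^(c-1)`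
for all `a ≥ 1`. -/
theorem R_degree_bound (c : ℕ) (hc : 1 ≤ c) :
    ∃ K : ℕ, ∀ a : ℕ, 1 ≤ a → R c a ≤ K * a ^ (c - 1) := by
  classical
  refine ⟨2 ^ (2 ^ c) * 2 ^ (c - 1), fun a ha => ?_⟩
  have step1 : R c a ≤ Nat.card {z : Rank3Lat c a // MyAux.IsSorted z} := by
    apply Nat.card_le_card_of_surjective
      (fun s : {z : Rank3Lat c a // MyAux.IsSorted z} => Quot.mk (Rank3Iso) s.1)
    intro q
    induction q using Quot.ind with
    | _ x =>
      obtain ⟨y, hy, hiso⟩ := MyAux.exists_sorted x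
      exact ⟨⟨y, hy⟩, Quot.sound hiso⟩
  have step2 : Nat.card {z : Rank3Lat c a // MyAux.IsSorted z}
      ≤ Nat.card (Finset (Finset (Fin c)) × (Fin (c - 1) → Fin (a + 1))) :=
    Nat.card_le_card_of_injective _ (MyAux.Psi_injective hc)
  have step3 : Nat.card (Finset (Finset (Fin c)) × (Fin (c - 1) → Fin (a + 1)))
      = 2 ^ (2 ^ c) * (a + 1) ^ (c - 1) := by
    simp [Nat.card_eq_fintype_card, Fintype.card_finset]
  have step4 : (a + 1) ^ (c - 1) ≤ 2 ^ (c - 1) * a ^ (c - 1) := by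
    rw [← mul_pow]
    exact Nat.pow_le_pow_left (by omega) _
  calc R c a ≤ 2 ^ (2 ^ c) * (a + 1) ^ (c - 1) := by
        rw [← step3]; exact step1.trans step2
    _ ≤ 2 ^ (2 ^ c) * (2 ^ (c - 1) * a ^ (c - 1)) := Nat.mul_le_mul_left _ step4
    _ = 2 ^ (2 ^ c) * 2 ^ (c - 1) * a ^ (c - 1) := by ring
end
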